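/- Let A be a locally finite hyperplane arrangement in ℝⁿ and x₀ a generic point. For each chamber C, let F_C be the smallest face of C containing the projection proj_C(x₀). Then the number of chambers C with codim(F_C) = 0 is exactly 1 (namely the chamber containing x₀), and the number of chambers C with codim(F_C) = 1 equals the number of hyperplanes of A. -/

import Mathlib

open Metric Set MeasureTheory

noncomputable section

/-- A locally finite arrangement of affine hyperplanes in ℝⁿ, given by affine
equations `⟪a i, x⟫ = b i` with `a i ≠ 0`, indexed injectively by `ι`. -/
structure Arrangement (n : ℕ) (ι : Type) where
  a : ι → EuclideanSpace ℝ (Fin n)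
  b : ι → ℝ
  ha : ∀ i, a i ≠ 0
  inj : Function.Injective fun i => {x : EuclideanSpace ℝ (Fin n) | (inner ℝ (a i) x : ℝ) = b i}
  locFin : ∀ x : EuclideanSpace ℝ (Fin n), ∃ ε > 0,
    {i : ι | ∃ y ∈ Metric.ball x ε, (inner ℝ (a i) y : ℝ) = b i}.Finite

namespace Arrangement

variable {n : ℕ} {ι : Type} (A : Arrangement n ι)

/-- The defining affine functional of the `i`-th hyperplane. -/
def val (i : ι) (x : EuclideanSpace ℝ (Fin n)) : ℝ := (inner ℝ (A.a i) x : ℝ) - A.b i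

/-- The `i`-th hyperplane. -/
def hyperplane (i : ι) : Set (EuclideanSpace ℝ (Fin n)) := {x | A.val i x = 0}

/-- The sign vector of a point. -/
def signAt (x : EuclideanSpace ℝ (Fin n)) : ι → SignType := fun i => SignType.sign (A.val i x)

/-- The (relatively open) stratum with sign vector `σ`. -/
def openCell (σ : ι → SignType) : Set (EuclideanSpace ℝ (Fin n)) :=
  {x | ∀ i, SignType.sign (A.val i x) = σ i}

/-- The (closed) faces of the arrangement: closures of the strata. -/
def IsFace (F : Set (EuclideanSpace ℝ (Fin n))) : Prop :=
  ∃ x : EuclideanSpace ℝ (Fin n), F = closure (A.openCell (A.signAt x))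

/-- Chambers: closed faces of codimension 0. -/
def IsChamber (C : Set (EuclideanSpace ℝ (Fin n))) : Prop :=
  ∃ x : EuclideanSpace ℝ (Fin n), (∀ i, A.val i x ≠ 0) ∧
    C = closure (A.openCell (A.signAt x))

/-- The support of a subset: the hyperplanes containing it. -/
def supp (U : Set (EuclideanSpace ℝ (Fin n))) : Set ι := {i | U ⊆ A.hyperplane i}

/-- The set of hyperplanes separating two chambers. -/
def sep (C C' : Set (EuclideanSpace ℝ (Fin n))) : Set ι :=
  {i | ∀ x ∈ interior C, ∀ y ∈ interior C', A.val i x * A.val i y < 0}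

/-- `F` is a face of the chamber (or face) `C`. -/
def IsFaceOf (F C : Set (EuclideanSpace ℝ (Fin n))) : Prop := A.IsFace F ∧ F ⊆ C

/-- `A.IsCF C F D` means `D = C.F`: `D` is the unique chamber containing `F` and not
separated from `C` by any hyperplane of `supp F`. -/
def IsCF (C F D : Set (EuclideanSpace ℝ (Fin n))) : Prop :=
  A.IsChamber D ∧ F ⊆ D ∧ A.sep C D ∩ A.supp F = ∅

/-- `A.IsOpp D F E` means `E = D^F`: `E` is the chamber opposite to `D` with respect to
its face `F`, i.e. the hyperplanes separating `D` and `E` are exactly those containing `F`. -/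
def IsOpp (D F E : Set (EuclideanSpace ℝ (Fin n))) : Prop :=
  A.IsChamber E ∧ F ⊆ E ∧ A.sep D E = A.supp F

/-- Flats: nonempty intersections of subfamilies of hyperplanes (including ℝⁿ itself). -/
def IsFlat (X : Set (EuclideanSpace ℝ (Fin n))) : Prop :=
  X.Nonempty ∧ ∃ s : Set ι, X = ⋂ i ∈ s, A.hyperplane i

/-- A cell `⟨C, F⟩` of the Salvetti complex: a chamber `C` together with a face `F` of `C`. -/
structure Cell {n : ℕ} {ι : Type} (𝒜 : Arrangement n ι) where
  C : Set (EuclideanSpace ℝ (Fin n))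
  F : Set (EuclideanSpace ℝ (Fin n))
  isChamber : 𝒜.IsChamber C
  isFace : 𝒜.IsFace F
  faceLe : F ⊆ C

/-- The Salvetti order: `⟨C,F⟩ ≤ ⟨D,G⟩` iff `F ⪯ G` (i.e. `F ⊇ G`) and `D.F = C`. -/
def cellLE (c d : A.Cell) : Prop := d.F ⊆ c.F ∧ A.IsCF d.C c.F c.C

/-- The subcomplex `S(C)`: cells `⟨D,F⟩` with `D = C.F`. -/
def inS (C : Set (EuclideanSpace ℝ (Fin n))) (c : A.Cell) : Prop := A.IsCF C c.F c.C

/-- A strict total order on the chambers. -/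
def IsChamberOrder (lt : Set (EuclideanSpace ℝ (Fin n)) → Set (EuclideanSpace ℝ (Fin n)) → Prop) :
    Prop :=
  (∀ C C', A.IsChamber C → A.IsChamber C' → C ≠ C' → lt C C' ∨ lt C' C) ∧
  (∀ C, ¬ lt C C) ∧
  (∀ C C' C'', lt C C' → lt C' C'' → lt C C'')

/-- The upper ideal `J(C)` of the poset of flats determined by a total order on chambers. -/
def J (lt : Set (EuclideanSpace ℝ (Fin n)) → Set (EuclideanSpace ℝ (Fin n)) → Prop)
    (C : Set (EuclideanSpace ℝ (Fin n))) : Set (Set (EuclideanSpace ℝ (Fin n))) :=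
  {X | A.IsFlat X ∧ ∀ C', A.IsChamber C' → lt C' C → (A.supp X ∩ A.sep C C').Nonempty}

/-- A valid order: for each chamber `C`, the ideal `J(C)` is the principal upper ideal
(in the poset of flats ordered by reverse inclusion) generated by `X_C = |F_C|` for some
face `F_C` of `C`. -/
def IsValidOrder
    (lt : Set (EuclideanSpace ℝ (Fin n)) → Set (EuclideanSpace ℝ (Fin n)) → Prop) : Prop :=
  A.IsChamberOrder lt ∧
  ∀ C, A.IsChamber C → ∃ F_C, A.IsFaceOf F_C C ∧
    A.J lt C = {X | A.IsFlat X ∧ X ⊆ (affineSpan ℝ F_C : Set (EuclideanSpace ℝ (Fin n)))}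

/-- Membership in `N(C)`: cells of `S(C)` not lying in any earlier `S(C')`. -/
def inN (lt : Set (EuclideanSpace ℝ (Fin n)) → Set (EuclideanSpace ℝ (Fin n)) → Prop)
    (C : Set (EuclideanSpace ℝ (Fin n))) (c : A.Cell) : Prop :=
  A.inS C c ∧ ∀ C', A.IsChamber C' → lt C' C → ¬ A.inS C' c

/-- A point `x₀` is generic with respect to `A`: (i) chambers at equal distance from `x₀`
have the same metric projection of `x₀`, lying in their intersection; (ii) distances to
strictly comparable flats are strictly comparable. -/
def IsGeneric (x₀ : EuclideanSpace ℝ (Fin n)) : Prop :=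
  (∀ C C', A.IsChamber C → A.IsChamber C' → infDist x₀ C = infDist x₀ C' →
    ∀ p ∈ C, ∀ p' ∈ C', (∀ q ∈ C, dist x₀ p ≤ dist x₀ q) →
      (∀ q ∈ C', dist x₀ p' ≤ dist x₀ q) → p = p' ∧ p ∈ C ∩ C') ∧
  (∀ L L', A.IsFlat L → A.IsFlat L' → L' ⊂ L → infDist x₀ L < infDist x₀ L')

end Arrangement

-- ==================== auxiliary development ====================

namespace Arrangement
variable {n : ℕ} {ι : Type} (A : Arrangement n ι)

lemma sgn_mul {r s : ℝ} (h : 0 < r * s) : SignType.sign s = SignType.sign r := by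
  rcases lt_trichotomy r 0 with hr | hr | hr
  · have hs : s < 0 := by nlinarith
    rw [sign_neg hs, sign_neg hr]
  · simp [hr] at h
  · have hs : 0 < s := by nlinarith
    rw [sign_pos hs, sign_pos hr]

lemma sgn_coe_mul_nonneg (r : ℝ) : 0 ≤ (SignType.sign r : ℝ) * r := by
  rcases lt_trichotomy r 0 with hr | hr | hr
  · rw [sign_neg hr]; simp; nlinarith
  · simp [hr]
  · rw [sign_pos hr]; simp; nlinarith

lemma sgn_of_coe_mul_pos {s : SignType} {r : ℝ} (h : 0 < (s : ℝ) * r) : SignType.sign r = s := by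
  cases s with
  | zero => simp at h
  | pos =>
      have : 0 < r := by simpa using h
      simp [sign_pos this]
  | neg =>
      have : r < 0 := by
        simp at h; linarith [h]
      simp [sign_neg this]

lemma sgn_coe_ne_zero {s : SignType} (h : s ≠ 0) : (s : ℝ) ≠ 0 := by
  cases s <;> simp_all

lemma mul_nonpos_of_sign_neg {r s : ℝ} (hr : r ≠ 0)
    (h : 0 ≤ (SignType.sign (-r) : ℝ) * s) : r * s ≤ 0 := by
  rcases hr.lt_or_gt with h1 | h1
  · have h2 : SignType.sign (-r) = 1 := sign_pos (by linarith)
    rw [h2] at h; simp at h; nlinarith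
  · have h2 : SignType.sign (-r) = -1 := sign_neg (by linarith)
    rw [h2] at h; simp at h; nlinarith

lemma sgn_dichotomy {r : ℝ} (hr : r ≠ 0) {s : SignType} (hs : s ≠ 0)
    (hne : s ≠ SignType.sign (-r)) : s = SignType.sign r := by
  rcases hr.lt_or_gt with h1 | h1
  · have e1 : SignType.sign r = -1 := sign_neg h1
    have e2 : SignType.sign (-r) = 1 := sign_pos (by linarith)
    rw [e1]; rw [e2] at hne
    cases s <;> simp_all
  · have e1 : SignType.sign r = 1 := sign_pos h1
    have e2 : SignType.sign (-r) = -1 := sign_neg (by linarith)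
    rw [e1]; rw [e2] at hne
    cases s <;> simp_all

lemma continuous_val (i : ι) : Continuous (A.val i) := by
  unfold Arrangement.val
  exact (continuous_const.inner continuous_id).sub continuous_const

lemma val_add_smul (i : ι) (x u : EuclideanSpace ℝ (Fin n)) (t : ℝ) :
    A.val i (x + t • u) = A.val i x + t * (inner ℝ (A.a i) u : ℝ) := by
  unfold Arrangement.val
  rw [inner_add_right, real_inner_smul_right]; ring

lemma inner_sub_val (i : ι) (x y : EuclideanSpace ℝ (Fin n)) :
    (inner ℝ (A.a i) (y - x) : ℝ) = A.val i y - A.val i x := by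
  rw [inner_sub_right]; unfold Arrangement.val; ring

lemma mem_hyperplane (i : ι) (x : EuclideanSpace ℝ (Fin n)) :
    x ∈ A.hyperplane i ↔ A.val i x = 0 := Iff.rfl

lemma ball_sign (x : EuclideanSpace ℝ (Fin n)) :
    ∃ δ > 0, ∀ y, dist y x < δ → ∀ i, A.val i x ≠ 0 → 0 < A.val i x * A.val i y := by
  classical
  obtain ⟨ε, hε, hfin⟩ := A.locFin x
  set S := hfin.toFinset with hS
  set V : Set (EuclideanSpace ℝ (Fin n)) :=
    ball x ε ∩ ⋂ i ∈ S, {y | A.val i x = 0 ∨ 0 < A.val i x * A.val i y} with hV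
  have hVopen : IsOpen V := by
    apply IsOpen.inter isOpen_ball
    apply isOpen_biInter_finset
    intro i _
    by_cases h : A.val i x = 0
    · convert isOpen_univ using 1
      ext y; simp [h]
    · have heq : {y | A.val i x = 0 ∨ 0 < A.val i x * A.val i y}
          = (fun y => A.val i x * A.val i y) ⁻¹' Set.Ioi 0 := by
        ext y; simp [h]
      rw [heq]
      exact (continuous_const.mul (A.continuous_val i)).isOpen_preimage _ isOpen_Ioi
  have hxV : x ∈ V := by
    refine ⟨mem_ball_self hε, ?_⟩
    simp only [Set.mem_iInter]
    intro i _
    by_cases h : A.val i x = 0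
    · exact Or.inl h
    · exact Or.inr (mul_self_pos.2 h)
  obtain ⟨δ, hδ, hball⟩ := Metric.isOpen_iff.1 hVopen x hxV
  refine ⟨δ, hδ, fun y hy i hi => ?_⟩
  have hyV : y ∈ V := hball (by rwa [mem_ball])
  obtain ⟨hyε, hyI⟩ := hyV
  by_cases hiS : i ∈ S
  · have := (Set.mem_iInter.1 hyI) i
    have := (Set.mem_iInter.1 this) hiS
    rcases this with h0 | hpos
    · exact absurd h0 hi
    · exact hpos
  · -- i ∉ S : val i has no zero on ball x ε
    have hnz : ∀ z ∈ ball x ε, A.val i z ≠ 0 := by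
      intro z hz h0
      apply hiS
      rw [hS, Set.Finite.mem_toFinset]
      exact ⟨z, hz, by unfold Arrangement.val at h0; linarith⟩
    have hyne : A.val i y ≠ 0 := hnz y hyε
    by_contra hle
    push_neg at hle
    have hlt : A.val i x * A.val i y < 0 :=
      lt_of_le_of_ne hle (mul_ne_zero hi hyne)
    set d : ℝ := A.val i y - A.val i x with hd
    set t : ℝ := -A.val i x / d with ht
    have hne : d ≠ 0 := by
      intro h0
      have : A.val i y = A.val i x := by linarith [hd ▸ h0]
      rw [this] at hlt; nlinarith
    have ht01 : 0 ≤ t ∧ t ≤ 1 := by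
      rcases hi.lt_or_gt with hp | hp
      · -- val x < 0, then val y > 0, d > 0
        have hq : 0 < A.val i y := by nlinarith
        have hdpos : 0 < d := by rw [hd]; linarith
        constructor
        · apply div_nonneg (by linarith) hdpos.le
        · rw [div_le_one hdpos]; linarith
      · have hq : A.val i y < 0 := by nlinarith
        have hdneg : d < 0 := by rw [hd]; linarith
        constructor
        · rw [ht, div_nonneg_iff]; right; constructor <;> linarith
        · rw [ht, div_le_iff_of_neg hdneg]; linarith
    set z := x + t • (y - x) with hz
    have hzball : z ∈ ball x ε := by
      have hcomb : (1 - t) • x + t • y = z := by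
        rw [hz]; rw [smul_sub, sub_smul, one_smul]; abel
      rw [← hcomb]
      exact convex_ball x ε (mem_ball_self hε) hyε (by linarith [ht01.2]) ht01.1 (by ring)
    have hzval : A.val i z = 0 := by
      rw [hz, A.val_add_smul, A.inner_sub_val, ← hd, ht]
      field_simp; ring
    exact hnz z hzball hzval

lemma halfball (i : ι) (σ : ι → SignType) (p : EuclideanSpace ℝ (Fin n))
    (hj : ∀ j, j ≠ i → A.val j p ≠ 0 ∧ SignType.sign (A.val j p) = σ j) :
    ∃ δ > 0, ∀ z, dist z p < δ → SignType.sign (A.val i z) = σ i → z ∈ A.openCell σ := by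
  obtain ⟨δ, hδ, hb⟩ := A.ball_sign p
  refine ⟨δ, hδ, fun z hz hsi j => ?_⟩
  by_cases hji : j = i
  · subst hji; exact hsi
  · obtain ⟨h1, h2⟩ := hj j hji
    rw [sgn_mul (hb z hz j h1)]
    exact h2

lemma fullball (σ : ι → SignType) (p : EuclideanSpace ℝ (Fin n))
    (h : ∀ j, A.val j p ≠ 0 ∧ SignType.sign (A.val j p) = σ j) :
    ∃ δ > 0, ∀ z, dist z p < δ → z ∈ A.openCell σ := by
  obtain ⟨δ, hδ, hb⟩ := A.ball_sign p
  refine ⟨δ, hδ, fun z hz j => ?_⟩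
  obtain ⟨h1, h2⟩ := h j
  rw [sgn_mul (hb z hz j h1)]
  exact h2

lemma inner_self_pos' (i : ι) : (0:ℝ) < inner ℝ (A.a i) (A.a i) := by
  rw [real_inner_self_eq_norm_sq]
  have := norm_pos_iff.2 (A.ha i)
  positivity

lemma mem_closure_halfball (i : ι) (σ : ι → SignType) (p : EuclideanSpace ℝ (Fin n))
    (hj : ∀ j, j ≠ i → A.val j p ≠ 0 ∧ SignType.sign (A.val j p) = σ j)
    (hσ : σ i ≠ 0) :
    ∃ δ > 0, ∀ z, dist z p < δ → A.val i z = 0 → z ∈ closure (A.openCell σ) := by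
  obtain ⟨δ, hδ, hb⟩ := A.halfball i σ p hj
  refine ⟨δ, hδ, fun z hz hzi => ?_⟩
  rw [Metric.mem_closure_iff]
  intro ε hε
  set u : EuclideanSpace ℝ (Fin n) := ((σ i : ℝ)) • A.a i with hu
  have hinner : (inner ℝ (A.a i) u : ℝ) = (σ i : ℝ) * inner ℝ (A.a i) (A.a i) := by
    rw [hu, real_inner_smul_right]
  have hupos : 0 < (σ i : ℝ) * (inner ℝ (A.a i) u : ℝ) := by
    rw [hinner, ← mul_assoc]
    have h1 : (0:ℝ) < (σ i : ℝ) * (σ i : ℝ) := by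
      have := sgn_coe_ne_zero hσ
      exact mul_self_pos.2 this
    exact mul_pos h1 (A.inner_self_pos' i)
  set M : ℝ := ‖u‖ + 1 with hM
  have hMpos : 0 < M := by positivity
  set s : ℝ := min ε (δ - dist z p) / (2 * M) with hs
  have hspos : 0 < s := by
    apply div_pos _ (by positivity)
    apply lt_min hε (by linarith)
  have hsu : s * ‖u‖ < min ε (δ - dist z p) := by
    calc s * ‖u‖ ≤ s * M := by
          apply mul_le_mul_of_nonneg_left _ hspos.le
          rw [hM]; linarith
      _ = min ε (δ - dist z p) / 2 := by rw [hs]; field_simp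
      _ < min ε (δ - dist z p) := by
          have : 0 < min ε (δ - dist z p) := lt_min hε (by linarith)
          linarith
  set w := z + s • u with hw
  have hdzw : dist z w = s * ‖u‖ := by
    rw [hw, dist_eq_norm]
    simp [norm_smul, abs_of_pos hspos]
  refine ⟨w, ?_, ?_⟩
  · apply hb
    · calc dist w p ≤ dist w z + dist z p := dist_triangle _ _ _
        _ < (δ - dist z p) + dist z p := by
            rw [dist_comm w z, hdzw]
            have := lt_of_lt_of_le hsu (min_le_right _ _)
            linarith
        _ = δ := by ring
    · have hval : A.val i w = s * (inner ℝ (A.a i) u : ℝ) := by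
        rw [hw, A.val_add_smul, hzi]; ring
      apply sgn_of_coe_mul_pos
      rw [hval]
      calc (0:ℝ) < s * ((σ i : ℝ) * (inner ℝ (A.a i) u : ℝ)) := mul_pos hspos hupos
        _ = (σ i : ℝ) * (s * (inner ℝ (A.a i) u : ℝ)) := by ring
  · rw [hdzw]
    exact lt_of_lt_of_le hsu (min_le_left _ _)

lemma closure_subset_halfspace (σ : ι → SignType) (i : ι) :
    closure (A.openCell σ) ⊆ {z | 0 ≤ (σ i : ℝ) * A.val i z} := by
  apply closure_minimal
  · intro z hz
    have h := hz i
    simp only [Set.mem_setOf_eq]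
    rw [← h]
    exact sgn_coe_mul_nonneg _
  · have heq : {z : EuclideanSpace ℝ (Fin n) | 0 ≤ (σ i : ℝ) * A.val i z}
        = (fun z => (σ i : ℝ) * A.val i z) ⁻¹' Set.Ici 0 := rfl
    rw [heq]
    exact IsClosed.preimage (continuous_const.mul (A.continuous_val i)) isClosed_Ici

lemma isChamber_closure (σ : ι → SignType) (hσ : ∀ j, σ j ≠ 0)
    (y : EuclideanSpace ℝ (Fin n)) (hy : y ∈ A.openCell σ) :
    A.IsChamber (closure (A.openCell σ)) := by
  have hsy : A.signAt y = σ := funext fun j => hy j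
  refine ⟨y, fun j h0 => hσ j ?_, by rw [hsy]⟩
  rw [← hy j, h0, sign_zero]


def qpt (i : ι) (x₀ : EuclideanSpace ℝ (Fin n)) : EuclideanSpace ℝ (Fin n) :=
  x₀ - (A.val i x₀ / (inner ℝ (A.a i) (A.a i) : ℝ)) • A.a i

lemma val_qpt (i : ι) (x₀ : EuclideanSpace ℝ (Fin n)) : A.val i (A.qpt i x₀) = 0 := by
  have haa := A.inner_self_pos' i
  have : A.qpt i x₀ = x₀ + (-(A.val i x₀ / (inner ℝ (A.a i) (A.a i) : ℝ))) • A.a i := by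
    rw [Arrangement.qpt, neg_smul, sub_eq_add_neg]
  rw [this, A.val_add_smul, neg_mul, div_mul_cancel₀ _ haa.ne']
  ring

lemma x0_sub_qpt (i : ι) (x₀ : EuclideanSpace ℝ (Fin n)) :
    x₀ - A.qpt i x₀ = (A.val i x₀ / (inner ℝ (A.a i) (A.a i) : ℝ)) • A.a i := by
  rw [Arrangement.qpt, sub_sub_cancel]

lemma dist_halfspace (i : ι) (x₀ z : EuclideanSpace ℝ (Fin n))
    (h : A.val i x₀ * A.val i z ≤ 0) :
    dist x₀ (A.qpt i x₀) ≤ dist x₀ z ∧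
      (dist x₀ z ≤ dist x₀ (A.qpt i x₀) → z = A.qpt i x₀) := by
  have haa := A.inner_self_pos' i
  set q := A.qpt i x₀ with hq
  set c : ℝ := A.val i x₀ / (inner ℝ (A.a i) (A.a i) : ℝ) with hc
  have hip : (inner ℝ (x₀ - q) (z - q) : ℝ) = c * A.val i z := by
    rw [hq, A.x0_sub_qpt, real_inner_smul_left, A.inner_sub_val, A.val_qpt]
    ring
  have hiple : (inner ℝ (x₀ - q) (z - q) : ℝ) ≤ 0 := by
    rw [hip, hc]
    rw [div_mul_eq_mul_div]
    exact div_nonpos_of_nonpos_of_nonneg h haa.le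
  have hkey : ‖x₀ - z‖ ^ 2
      = ‖x₀ - q‖ ^ 2 - 2 * (inner ℝ (x₀ - q) (z - q) : ℝ) + ‖z - q‖ ^ 2 := by
    have : x₀ - z = (x₀ - q) - (z - q) := by abel
    rw [this, norm_sub_sq_real]
  have h1 : dist x₀ q ^ 2 ≤ dist x₀ z ^ 2 := by
    rw [dist_eq_norm, dist_eq_norm]
    nlinarith [sq_nonneg ‖z - q‖]
  constructor
  · nlinarith [dist_nonneg (x := x₀) (y := q), dist_nonneg (x := x₀) (y := z)]
  · intro hle
    have h2 : dist x₀ z ^ 2 ≤ dist x₀ q ^ 2 := by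
      nlinarith [dist_nonneg (x := x₀) (y := q), dist_nonneg (x := x₀) (y := z)]
    have h3 : ‖z - q‖ ^ 2 ≤ 0 := by
      rw [dist_eq_norm, dist_eq_norm] at h2
      nlinarith
    have h4 : ‖z - q‖ = 0 := by nlinarith [norm_nonneg (z - q), sq_nonneg ‖z - q‖]
    have := norm_eq_zero.1 h4
    rw [sub_eq_zero] at this
    exact this

lemma infDist_hyperplane (i : ι) (x₀ : EuclideanSpace ℝ (Fin n)) :
    infDist x₀ (A.hyperplane i) = dist x₀ (A.qpt i x₀) := by
  have hmem : A.qpt i x₀ ∈ A.hyperplane i := A.val_qpt i x₀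
  apply le_antisymm (infDist_le_dist_of_mem hmem)
  by_contra hlt
  push_neg at hlt
  obtain ⟨z, hz, hd⟩ := (infDist_lt_iff ⟨_, hmem⟩).1 hlt
  have hz0 : A.val i z = 0 := hz
  have := (A.dist_halfspace i x₀ z (by rw [hz0]; simp)).1
  linarith

lemma isFlat_univ : A.IsFlat Set.univ :=
  ⟨⟨0, trivial⟩, ∅, by simp⟩

lemma isFlat_hyperplane (i : ι) : A.IsFlat (A.hyperplane i) :=
  ⟨⟨A.qpt i 0, A.val_qpt i 0⟩, {i}, by simp⟩

lemma hyperplane_ne_univ (i : ι) : A.hyperplane i ≠ Set.univ := by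
  intro h
  have haa := A.inner_self_pos' i
  have hmem : A.qpt i 0 + ((inner ℝ (A.a i) (A.a i) : ℝ))⁻¹ • A.a i ∈ A.hyperplane i := by
    rw [h]; trivial
  rw [mem_hyperplane, A.val_add_smul, A.val_qpt] at hmem
  rw [inv_mul_cancel₀ haa.ne'] at hmem
  linarith

lemma hyperplane_subset_eq (i j : ι) (h : A.hyperplane i ⊆ A.hyperplane j) : i = j := by
  have haa := A.inner_self_pos' i
  set a := A.a i with ha'
  set c := A.a j with hc'
  set μ : ℝ := (inner ℝ c a : ℝ) / (inner ℝ a a : ℝ) with hμ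
  set w : EuclideanSpace ℝ (Fin n) := c - μ • a with hw
  have haw : (inner ℝ a w : ℝ) = 0 := by
    rw [hw, inner_sub_right, real_inner_smul_right, hμ, div_mul_cancel₀ _ haa.ne',
      real_inner_comm a c]
    ring
  set q0 : EuclideanSpace ℝ (Fin n) := (A.b i / (inner ℝ a a : ℝ)) • a with hq0
  have hq0i : A.val i q0 = 0 := by
    rw [Arrangement.val, hq0, real_inner_smul_right, div_mul_cancel₀ _ haa.ne']
    ring
  have hq0wi : A.val i (q0 + w) = 0 := by
    rw [Arrangement.val, inner_add_right]
    rw [Arrangement.val] at hq0i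
    rw [haw]; linarith
  have hq0j : A.val j q0 = 0 := h hq0i
  have hq0wj : A.val j (q0 + w) = 0 := h hq0wi
  have hcw : (inner ℝ c w : ℝ) = 0 := by
    rw [Arrangement.val, inner_add_right] at hq0wj
    rw [Arrangement.val] at hq0j
    linarith
  have hww : (inner ℝ w w : ℝ) = 0 := by
    have hcw2 : (inner ℝ c w : ℝ) = μ * (inner ℝ a w : ℝ) + (inner ℝ w w : ℝ) := by
      have : c = μ • a + w := by rw [hw]; abel
      rw [this, inner_add_left, real_inner_smul_left]
    rw [hcw2, haw] at hcw
    linarith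
  have hw0 : w = 0 := inner_self_eq_zero.1 hww
  have hcμa : c = μ • a := by
    have : c - μ • a = 0 := hw0
    rwa [sub_eq_zero] at this
  have hμ0 : μ ≠ 0 := by
    intro h0
    apply A.ha j
    rw [← hc', hcμa, h0, zero_smul]
  have hbj : A.b j = μ * A.b i := by
    have := hq0j
    rw [Arrangement.val, hq0] at this
    rw [← hc'] at this
    rw [hcμa, real_inner_smul_left, real_inner_smul_right,
      div_mul_cancel₀ _ haa.ne'] at this
    linarith
  apply A.inj
  ext x
  simp only [Set.mem_setOf_eq]
  rw [← ha', ← hc', hcμa, real_inner_smul_left, hbj]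
  constructor
  · intro hx; rw [hx]
  · intro hx; exact mul_left_cancel₀ hμ0 hx

lemma val_x0_ne (x₀ : EuclideanSpace ℝ (Fin n))
    (hgen : ∀ L L', A.IsFlat L → A.IsFlat L' → L ≠ L' → infDist x₀ L ≠ infDist x₀ L')
    (i : ι) : A.val i x₀ ≠ 0 := by
  intro h
  have h1 := hgen Set.univ (A.hyperplane i) A.isFlat_univ (A.isFlat_hyperplane i)
    (Ne.symm (A.hyperplane_ne_univ i))
  apply h1
  rw [infDist_zero_of_mem (Set.mem_univ x₀)]
  exact (infDist_zero_of_mem (show x₀ ∈ A.hyperplane i from h)).symm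

lemma val_qpt_ne (x₀ : EuclideanSpace ℝ (Fin n))
    (hgen : ∀ L L', A.IsFlat L → A.IsFlat L' → L ≠ L' → infDist x₀ L ≠ infDist x₀ L')
    (i j : ι) (hij : j ≠ i) : A.val j (A.qpt i x₀) ≠ 0 := by
  intro h0
  set q := A.qpt i x₀ with hq
  have hqi : A.val i q = 0 := A.val_qpt i x₀
  set L' : Set (EuclideanSpace ℝ (Fin n)) := A.hyperplane i ∩ A.hyperplane j with hL'
  have hqL' : q ∈ L' := ⟨hqi, h0⟩
  have hflat : A.IsFlat L' := by
    refine ⟨⟨q, hqL'⟩, {i, j}, ?_⟩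
    rw [hL', Set.biInter_pair]
  have hne : A.hyperplane i ≠ L' := by
    intro he
    have hsub : A.hyperplane i ⊆ A.hyperplane j := by
      intro x hx
      have : x ∈ L' := he ▸ hx
      exact this.2
    exact hij (A.hyperplane_subset_eq i j hsub).symm
  apply hgen (A.hyperplane i) L' (A.isFlat_hyperplane i) hflat hne
  apply le_antisymm
  · exact infDist_le_infDist_of_subset Set.inter_subset_left ⟨q, hqL'⟩
  · rw [A.infDist_hyperplane]
    exact infDist_le_dist_of_mem hqL'
end Arrangement


set_option maxHeartbeats 1000000 in
/-- For a generic point `x₀`: there is exactly one chamber whose projection of `x₀` lies on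
no hyperplane (namely the chamber containing `x₀`), and for every hyperplane `H` there is
exactly one chamber whose projection of `x₀` lies on `H` and on no other hyperplane. -/
theorem stmt18 {n : ℕ} {ι : Type} (A : Arrangement n ι)
    (x₀ : EuclideanSpace ℝ (Fin n))
    (hgen : ∀ L L', A.IsFlat L → A.IsFlat L' → L ≠ L' → infDist x₀ L ≠ infDist x₀ L')
    (proj : Set (EuclideanSpace ℝ (Fin n)) → EuclideanSpace ℝ (Fin n))
    (hproj : ∀ C, A.IsChamber C → proj C ∈ C ∧ ∀ q ∈ C, dist x₀ (proj C) ≤ dist x₀ q) :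
    (∃! C, A.IsChamber C ∧ ∀ i, proj C ∉ A.hyperplane i) ∧
    (∀ C, A.IsChamber C → x₀ ∈ C → ∀ i, proj C ∉ A.hyperplane i) ∧
    (∀ i, ∃! C, A.IsChamber C ∧ proj C ∈ A.hyperplane i ∧
      ∀ j, j ≠ i → proj C ∉ A.hyperplane j) := by
  classical
  have hx0 : ∀ i, A.val i x₀ ≠ 0 := A.val_x0_ne x₀ hgen
  -- Part 2
  have part2 : ∀ C, A.IsChamber C → x₀ ∈ C → ∀ i, proj C ∉ A.hyperplane i := by
    intro C hC hx i
    obtain ⟨hpC, hmin⟩ := hproj C hC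
    have hle : dist x₀ (proj C) ≤ 0 := by simpa using hmin x₀ hx
    have hpx : proj C = x₀ := (dist_le_zero.1 hle).symm
    rw [hpx]
    exact fun h => hx0 i h
  -- The chamber containing x₀
  set σ₀ := A.signAt x₀ with hσ₀
  have hx₀cell : x₀ ∈ A.openCell σ₀ := fun i => rfl
  set C₀ := closure (A.openCell σ₀) with hC₀
  have hC₀ch : A.IsChamber C₀ := ⟨x₀, hx0, rfl⟩
  have hx₀C₀ : x₀ ∈ C₀ := subset_closure hx₀cell
  -- Part 1 uniqueness
  have part1uniq : ∀ C, (A.IsChamber C ∧ ∀ i, proj C ∉ A.hyperplane i) → C = C₀ := by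
    rintro C ⟨hCch, hCnot⟩
    obtain ⟨y, hvy, hCeq⟩ := hCch
    set σ := A.signAt y with hσdef
    obtain ⟨hpC, hmin⟩ := hproj C ⟨y, hvy, hCeq⟩
    set p := proj C with hpdef
    have hσ0 : ∀ j, σ j ≠ 0 := by
      intro j h
      apply hvy j
      rw [hσdef] at h
      exact sign_eq_zero_iff.1 h
    have hsgn : ∀ j, A.val j p ≠ 0 ∧ SignType.sign (A.val j p) = σ j := by
      intro j
      have h1 : A.val j p ≠ 0 := fun h => hCnot j h
      have h2 : 0 ≤ (σ j : ℝ) * A.val j p :=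
        A.closure_subset_halfspace σ j (by rw [hCeq] at hpC; exact hpC)
      have h3 : 0 < (σ j : ℝ) * A.val j p :=
        lt_of_le_of_ne h2 (Ne.symm (mul_ne_zero (Arrangement.sgn_coe_ne_zero (hσ0 j)) h1))
      exact ⟨h1, Arrangement.sgn_of_coe_mul_pos h3⟩
    have hpx : p = x₀ := by
      by_contra hne
      obtain ⟨δ, hδ, hfb⟩ := A.fullball σ p hsgn
      set u := x₀ - p with hu
      have hu0 : 0 < ‖u‖ := by rw [hu, norm_sub_pos_iff]; exact Ne.symm hne
      set t := min (δ / (2 * ‖u‖)) (1/2) with htdef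
      have ht0 : 0 < t := lt_min (by positivity) (by norm_num)
      have ht1 : t ≤ 1/2 := min_le_right _ _
      set z := p + t • u with hzdef
      have hdzp : dist z p < δ := by
        have hzz : z - p = t • u := by rw [hzdef]; abel
        rw [dist_eq_norm, hzz, norm_smul, Real.norm_eq_abs, abs_of_pos ht0]
        calc t * ‖u‖ ≤ δ / (2 * ‖u‖) * ‖u‖ :=
              mul_le_mul_of_nonneg_right (min_le_left _ _) hu0.le
          _ = δ / 2 := by field_simp
          _ < δ := by linarith
      have hzC : z ∈ C := by rw [hCeq]; exact subset_closure (hfb z hdzp)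
      have hdist : dist x₀ z = (1 - t) * ‖u‖ := by
        have hx₀z : x₀ - z = (1 - t) • u := by rw [hzdef, hu, sub_smul, one_smul]; abel
        rw [dist_eq_norm, hx₀z, norm_smul, Real.norm_eq_abs,
          abs_of_pos (by linarith : (0:ℝ) < 1 - t)]
      have hd0 : dist x₀ p = ‖u‖ := by rw [dist_eq_norm, hu]
      have hcon := hmin z hzC
      rw [hdist, hd0] at hcon
      nlinarith
    have hσeq : σ = σ₀ := by
      funext j
      rw [← (hsgn j).2, hpx, hσ₀]
      rfl
    rw [hCeq, hσeq]
  refine ⟨⟨C₀, ⟨hC₀ch, part2 C₀ hC₀ch hx₀C₀⟩, part1uniq⟩, part2, ?_⟩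
  -- Part 3
  intro i
  set q := A.qpt i x₀ with hqdef
  have hvq : A.val i q = 0 := A.val_qpt i x₀
  have hvj : ∀ j, j ≠ i → A.val j q ≠ 0 := fun j hj => A.val_qpt_ne x₀ hgen i j hj
  set σ : ι → SignType :=
    fun j => if j = i then SignType.sign (-A.val i x₀) else SignType.sign (A.val j q) with hσdef
  have hσi : σ i = SignType.sign (-A.val i x₀) := by simp [hσdef]
  have hσj : ∀ j, j ≠ i → σ j = SignType.sign (A.val j q) := fun j hj => by simp [hσdef, hj]
  have hσi0 : σ i ≠ 0 := by
    rw [hσi, Ne, sign_eq_zero_iff, neg_eq_zero]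
    exact hx0 i
  have hσ0 : ∀ j, σ j ≠ 0 := by
    intro j
    by_cases hj : j = i
    · subst hj; exact hσi0
    · rw [hσj j hj, Ne, sign_eq_zero_iff]; exact hvj j hj
  have hjcond : ∀ j, j ≠ i → A.val j q ≠ 0 ∧ SignType.sign (A.val j q) = σ j :=
    fun j hj => ⟨hvj j hj, (hσj j hj).symm⟩
  obtain ⟨δ, hδ, hcl⟩ := A.mem_closure_halfball i σ q hjcond hσi0
  have hqC : q ∈ closure (A.openCell σ) := hcl q (by simpa using hδ) hvq
  obtain ⟨y, hy⟩ := closure_nonempty_iff.1 ⟨q, hqC⟩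
  set C := closure (A.openCell σ) with hCdef
  have hCch : A.IsChamber C := A.isChamber_closure σ hσ0 y hy
  obtain ⟨hpC, hpmin⟩ := hproj C hCch
  set p := proj C with hpdef
  have hhs : 0 ≤ (σ i : ℝ) * A.val i p := A.closure_subset_halfspace σ i hpC
  have hmulle : A.val i x₀ * A.val i p ≤ 0 := by
    apply Arrangement.mul_nonpos_of_sign_neg (hx0 i)
    rwa [← hσi]
  have hpq : p = q := (A.dist_halfspace i x₀ p hmulle).2 (hpmin q hqC)
  have hpq2 : proj C = q := hpq
  refine ⟨C, ⟨hCch, ?_, ?_⟩, ?_⟩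
  · show A.val i (proj C) = 0
    rw [hpq2]
    exact hvq
  · intro j hj hmem
    rw [A.mem_hyperplane, hpq2] at hmem
    exact hvj j hj hmem
  -- Part 3 uniqueness
  rintro C' ⟨hC'ch, hp'i, hp'j⟩
  obtain ⟨y', hvy', hC'eq⟩ := hC'ch
  set σ' := A.signAt y' with hσ'def
  have hσ'0 : ∀ j, σ' j ≠ 0 := by
    intro j h
    apply hvy' j
    rw [hσ'def] at h
    exact sign_eq_zero_iff.1 h
  obtain ⟨hp'C, hp'min⟩ := hproj C' ⟨y', hvy', hC'eq⟩
  set p' := proj C' with hp'def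
  have hp'i0 : A.val i p' = 0 := hp'i
  have hsign' : ∀ j, j ≠ i → A.val j p' ≠ 0 ∧ SignType.sign (A.val j p') = σ' j := by
    intro j hj
    have h1 : A.val j p' ≠ 0 := fun h => hp'j j hj h
    have h2 : 0 ≤ (σ' j : ℝ) * A.val j p' :=
      A.closure_subset_halfspace σ' j (by rw [hC'eq] at hp'C; exact hp'C)
    have h3 : 0 < (σ' j : ℝ) * A.val j p' :=
      lt_of_le_of_ne h2 (Ne.symm (mul_ne_zero (Arrangement.sgn_coe_ne_zero (hσ'0 j)) h1))
    exact ⟨h1, Arrangement.sgn_of_coe_mul_pos h3⟩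
  have hp'x₀ : p' ≠ x₀ := by
    intro h
    apply hx0 i
    rw [← h]
    exact hp'i0
  have hσ'i : σ' i = SignType.sign (-A.val i x₀) := by
    by_contra hne
    have hσ'ipos : σ' i = SignType.sign (A.val i x₀) :=
      Arrangement.sgn_dichotomy (hx0 i) (hσ'0 i) hne
    obtain ⟨δ', hδ', hb'⟩ := A.halfball i σ' p' hsign'
    set u := x₀ - p' with hu
    have hu0 : 0 < ‖u‖ := by rw [hu, norm_sub_pos_iff]; exact Ne.symm hp'x₀
    set t := min (δ' / (2 * ‖u‖)) (1/2) with htdef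
    have ht0 : 0 < t := lt_min (by positivity) (by norm_num)
    have ht1 : t ≤ 1/2 := min_le_right _ _
    set z := p' + t • u with hzdef
    have hdzp : dist z p' < δ' := by
      have hzz : z - p' = t • u := by rw [hzdef]; abel
      rw [dist_eq_norm, hzz, norm_smul, Real.norm_eq_abs, abs_of_pos ht0]
      calc t * ‖u‖ ≤ δ' / (2 * ‖u‖) * ‖u‖ :=
            mul_le_mul_of_nonneg_right (min_le_left _ _) hu0.le
        _ = δ' / 2 := by field_simp
        _ < δ' := by linarith
    have hvz : A.val i z = t * A.val i x₀ := by
      rw [hzdef, A.val_add_smul, hp'i0, hu, A.inner_sub_val, hp'i0]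
      ring
    have hsignz : SignType.sign (A.val i z) = σ' i := by
      rw [hσ'ipos]
      apply Arrangement.sgn_mul
      rw [hvz]
      nlinarith [mul_self_pos.2 (hx0 i)]
    have hzC' : z ∈ C' := by
      rw [hC'eq]
      exact subset_closure (hb' z hdzp hsignz)
    have hdist : dist x₀ z = (1 - t) * ‖u‖ := by
      have hx₀z : x₀ - z = (1 - t) • u := by rw [hzdef, hu, sub_smul, one_smul]; abel
      rw [dist_eq_norm, hx₀z, norm_smul, Real.norm_eq_abs,
        abs_of_pos (by linarith : (0:ℝ) < 1 - t)]
    have hd0 : dist x₀ p' = ‖u‖ := by rw [dist_eq_norm, hu]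
    have hcon := hp'min z hzC'
    rw [hdist, hd0] at hcon
    nlinarith
  have hp'q : p' = q := by
    by_contra hne
    obtain ⟨δ', hδ', hcl'⟩ := A.mem_closure_halfball i σ' p' hsign' (hσ'0 i)
    set v := q - p' with hv
    have hv0 : 0 < ‖v‖ := by rw [hv, norm_sub_pos_iff]; exact Ne.symm hne
    set w := x₀ - q with hwv
    have hwv0 : (inner ℝ w v : ℝ) = 0 := by
      rw [hwv, hv, hqdef, A.x0_sub_qpt, real_inner_smul_left, A.inner_sub_val]
      rw [← hqdef, hvq, hp'i0]
      ring
    set t := min (δ' / (2 * ‖v‖)) (1/2) with htdef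
    have ht0 : 0 < t := lt_min (by positivity) (by norm_num)
    have ht1 : t ≤ 1/2 := min_le_right _ _
    set z := p' + t • v with hzdef
    have hzval : A.val i z = 0 := by
      rw [hzdef, A.val_add_smul, hp'i0, hv, A.inner_sub_val, hvq, hp'i0]
      ring
    have hdzp : dist z p' < δ' := by
      have hzz : z - p' = t • v := by rw [hzdef]; abel
      rw [dist_eq_norm, hzz, norm_smul, Real.norm_eq_abs, abs_of_pos ht0]
      calc t * ‖v‖ ≤ δ' / (2 * ‖v‖) * ‖v‖ :=
            mul_le_mul_of_nonneg_right (min_le_left _ _) hv0.le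
        _ = δ' / 2 := by field_simp
        _ < δ' := by linarith
    have hzC' : z ∈ C' := by rw [hC'eq]; exact hcl' z hdzp hzval
    have hxz : x₀ - z = w + (1 - t) • v := by
      rw [hzdef, hwv, hv, sub_smul, one_smul]; abel
    have hxp' : x₀ - p' = w + v := by rw [hwv, hv]; abel
    have e1 : dist x₀ z ^ 2 = ‖w‖ ^ 2 + (1 - t) ^ 2 * ‖v‖ ^ 2 := by
      rw [dist_eq_norm, hxz, norm_add_sq_real, real_inner_smul_right, hwv0, norm_smul,
        Real.norm_eq_abs, abs_of_pos (by linarith : (0:ℝ) < 1 - t)]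
      ring
    have e2 : dist x₀ p' ^ 2 = ‖w‖ ^ 2 + ‖v‖ ^ 2 := by
      rw [dist_eq_norm, hxp', norm_add_sq_real, hwv0]
      ring
    have hlt : dist x₀ z ^ 2 < dist x₀ p' ^ 2 := by
      rw [e1, e2]
      nlinarith [mul_pos (mul_pos ht0 (show (0:ℝ) < 2 - t by linarith)) (mul_pos hv0 hv0)]
    have hcon := hp'min z hzC'
    nlinarith [dist_nonneg (x := x₀) (y := z), dist_nonneg (x := x₀) (y := p')]
  have hσeq : σ' = σ := by
    funext j
    by_cases hj : j = i
    · subst hj; rw [hσ'i, hσi]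
    · rw [hσj j hj, ← (hsign' j hj).2, hp'q]
  rw [hC'eq, hσeq]
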